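/- For every integer ρ ≥ 1, the set ℝ^ρ ∖ {0} can be written as a union of at most 7^ρ subsets (cones) such that any two nonzero vectors u, v lying in the same subset satisfy ⟨u, v⟩ ≥ (3/4) |u| |v|, where ⟨·,·⟩ is the standard inner product and |·| the Euclidean norm. -/

import Mathlib

open Metric MeasureTheory Set ENNReal

/-- Packing bound: a `1/3`-separated finite set on the unit sphere of
`EuclideanSpace ℝ (Fin ρ)` (ρ ≥ 1) has at most `7 ^ ρ` elements. -/
lemma cone_decomposition_card_le (ρ : ℕ) (hρ : 1 ≤ ρ)
    (s : Finset (EuclideanSpace ℝ (Fin ρ)))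
    (h1 : ∀ p ∈ s, ‖p‖ = 1)
    (h2 : (s : Set (EuclideanSpace ℝ (Fin ρ))).Pairwise
      fun p q => (1/3 : ℝ) ≤ dist p q) :
    s.card ≤ 7 ^ ρ := by
  haveI : Nontrivial (EuclideanSpace ℝ (Fin ρ)) := by
    apply nontrivial_of_ne (EuclideanSpace.single ⟨0, hρ⟩ (1:ℝ)) 0
    intro h
    have := congrArg (fun v => v ⟨0, hρ⟩) h
    simp at this
  set V : ℝ≥0∞ := volume (ball (0 : EuclideanSpace ℝ (Fin ρ)) 1) with hV
  have hV0 : V ≠ 0 := (measure_ball_pos _ _ one_pos).ne'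
  have hVt : V ≠ ⊤ := measure_ball_lt_top.ne
  have hdisj : (s : Set (EuclideanSpace ℝ (Fin ρ))).PairwiseDisjoint
      (fun p => ball p (1/6 : ℝ)) := by
    intro p hp q hq hpq
    exact ball_disjoint_ball (by linarith [h2 hp hq hpq])
  have hball : ∀ p : EuclideanSpace ℝ (Fin ρ), volume (ball p (1/6 : ℝ))
      = ENNReal.ofReal ((1/6 : ℝ)^ρ) * V := by
    intro p
    rw [Measure.addHaar_ball volume p (by norm_num : (0:ℝ) ≤ 1/6),
      finrank_euclideanSpace_fin]
  have hsub : (⋃ p ∈ s, ball p (1/6 : ℝ))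
      ⊆ ball (0 : EuclideanSpace ℝ (Fin ρ)) (7/6) := by
    refine iUnion₂_subset fun p hp => ball_subset_ball' ?_
    rw [dist_zero_right, h1 p hp]; norm_num
  have hmeas : (s.card : ℝ≥0∞) * (ENNReal.ofReal ((1/6 : ℝ)^ρ) * V)
      ≤ ENNReal.ofReal ((7/6 : ℝ)^ρ) * V := by
    calc (s.card : ℝ≥0∞) * (ENNReal.ofReal ((1/6 : ℝ)^ρ) * V)
        = ∑ p ∈ s, volume (ball p (1/6 : ℝ)) := by
          rw [Finset.sum_congr rfl fun p _ => hball p, Finset.sum_const,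
            nsmul_eq_mul]
      _ = volume (⋃ p ∈ s, ball p (1/6 : ℝ)) :=
          (measure_biUnion_finset hdisj fun p _ => measurableSet_ball).symm
      _ ≤ volume (ball (0 : EuclideanSpace ℝ (Fin ρ)) (7/6)) := measure_mono hsub
      _ = ENNReal.ofReal ((7/6 : ℝ)^ρ) * V := by
          rw [Measure.addHaar_ball volume _ (by norm_num : (0:ℝ) ≤ 7/6),
            finrank_euclideanSpace_fin]
  have hcast : ENNReal.ofReal ((7/6 : ℝ)^ρ)
      = ENNReal.ofReal ((7:ℝ)^ρ) * ENNReal.ofReal ((1/6 : ℝ)^ρ) := by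
    rw [← ENNReal.ofReal_mul (by positivity), ← mul_pow]
    norm_num
  rw [hcast, mul_assoc] at hmeas
  have ha0 : ENNReal.ofReal ((1/6 : ℝ)^ρ) * V ≠ 0 :=
    mul_ne_zero (by simp only [ne_eq, ENNReal.ofReal_eq_zero, not_le]; positivity) hV0
  have hat : ENNReal.ofReal ((1/6 : ℝ)^ρ) * V ≠ ⊤ :=
    ENNReal.mul_ne_top ENNReal.ofReal_ne_top hVt
  have hle : (s.card : ℝ≥0∞) ≤ ENNReal.ofReal ((7:ℝ)^ρ) :=
    (ENNReal.mul_le_mul_iff_left ha0 hat).mp hmeas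
  have h7 : ENNReal.ofReal ((7:ℝ)^ρ) = ((7^ρ : ℕ) : ℝ≥0∞) := by
    rw [show ((7:ℝ)^ρ) = (((7^ρ : ℕ) : ℝ)) by push_cast; ring, ENNReal.ofReal_natCast]
  rw [h7] at hle
  exact_mod_cast hle

theorem cone_decomposition (ρ : ℕ) (hρ : 1 ≤ ρ) :
    ∃ (n : ℕ) (c : Fin n → Set (EuclideanSpace ℝ (Fin ρ))),
      n ≤ 7 ^ ρ ∧
      (⋃ i, c i) = {x : EuclideanSpace ℝ (Fin ρ) | x ≠ 0} ∧
      ∀ i, ∀ u ∈ c i, ∀ v ∈ c i,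
        (3 / 4 : ℝ) * ‖u‖ * ‖v‖ ≤ inner ℝ u v := by
  classical
  set E := EuclideanSpace ℝ (Fin ρ)
  -- the set of achievable cardinalities of separated finite sets on the sphere
  set P : Finset E → Prop := fun t =>
    (∀ p ∈ t, ‖p‖ = 1) ∧
    (t : Set E).Pairwise fun p q => (1/3 : ℝ) ≤ dist p q with hP
  set S : Set ℕ := {n | ∃ t : Finset E, P t ∧ t.card = n} with hS
  have h0S : 0 ∈ S := ⟨∅, ⟨by simp, by simp⟩, rfl⟩
  have hbdd : BddAbove S := by
    refine ⟨7 ^ ρ, fun n hn => ?_⟩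
    obtain ⟨t, ⟨ht1, ht2⟩, rfl⟩ := hn
    exact cone_decomposition_card_le ρ hρ t ht1 ht2
  obtain ⟨s, ⟨hs1, hs2⟩, hscard⟩ : ∃ t : Finset E, P t ∧ t.card = sSup S :=
    Nat.sSup_mem ⟨0, h0S⟩ hbdd
  -- maximality: every unit vector is within 1/3 of some point of s
  have hmax : ∀ x : E, ‖x‖ = 1 → ∃ p ∈ s, dist x p < 1/3 := by
    intro x hx
    by_contra h
    push_neg at h
    have hxs : x ∉ s := fun hxs => by
      have := h x hxs; simp at this; linarith [dist_self x]
    have hins : P (insert x s) := by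
      constructor
      · intro p hp
        rcases Finset.mem_insert.mp hp with rfl | hp
        · exact hx
        · exact hs1 p hp
      · rw [Finset.coe_insert]
        refine Set.pairwise_insert.mpr
          ⟨hs2, fun q hq _ => ⟨h q hq, by rw [dist_comm]; exact h q hq⟩⟩
    have : s.card + 1 ∈ S := ⟨insert x s, hins, by rw [Finset.card_insert_of_notMem hxs]⟩
    have := le_csSup hbdd this
    omega
  -- build the cones
  refine ⟨s.card, fun i =>
    {x : E | x ≠ 0 ∧ dist (‖x‖⁻¹ • x) ((s.equivFin.symm i : s) : E) < 1/3},
    cone_decomposition_card_le ρ hρ s hs1 hs2, ?_, ?_⟩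
  · ext x
    simp only [Set.mem_iUnion, Set.mem_setOf_eq]
    constructor
    · rintro ⟨i, hx, -⟩; exact hx
    · intro hx
      have hxnorm : ‖(‖x‖⁻¹ • x : E)‖ = 1 := by
        rw [norm_smul, norm_inv, norm_norm, inv_mul_cancel₀ (norm_ne_zero_iff.mpr hx)]
      obtain ⟨p, hp, hd⟩ := hmax _ hxnorm
      exact ⟨s.equivFin ⟨p, hp⟩, hx, by simpa using hd⟩
  · rintro i u ⟨hu, hud⟩ v ⟨hv, hvd⟩
    set p : E := ((s.equivFin.symm i : s) : E)
    set u' : E := ‖u‖⁻¹ • u with hu'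
    set v' : E := ‖v‖⁻¹ • v with hv'
    have hu0 : (0:ℝ) < ‖u‖ := norm_pos_iff.mpr hu
    have hv0 : (0:ℝ) < ‖v‖ := norm_pos_iff.mpr hv
    have hnu : ‖u'‖ = 1 := by
      rw [hu', norm_smul, norm_inv, norm_norm, inv_mul_cancel₀ hu0.ne']
    have hnv : ‖v'‖ = 1 := by
      rw [hv', norm_smul, norm_inv, norm_norm, inv_mul_cancel₀ hv0.ne']
    have hd : ‖u' - v'‖ < 2/3 := by
      have := dist_triangle u' p v'
      rw [dist_comm p v'] at this
      rw [← dist_eq_norm]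
      linarith [hud, hvd]
    have hinner : (3/4 : ℝ) ≤ inner ℝ u' v' := by
      have hsq : ‖u' - v'‖^2 = ‖u'‖^2 - 2 * inner ℝ u' v' + ‖v'‖^2 :=
        norm_sub_sq_real u' v'
      nlinarith [norm_nonneg (u' - v')]
    have hix : (inner ℝ u' v' : ℝ) = ‖u‖⁻¹ * (‖v‖⁻¹ * inner ℝ u v) := by
      rw [hu', hv', real_inner_smul_left, real_inner_smul_right]
    rw [hix] at hinner
    have := mul_le_mul_of_nonneg_left hinner (by positivity : (0:ℝ) ≤ ‖u‖ * ‖v‖)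
    calc (3/4 : ℝ) * ‖u‖ * ‖v‖ = ‖u‖ * ‖v‖ * (3/4) := by ring
      _ ≤ ‖u‖ * ‖v‖ * (‖u‖⁻¹ * (‖v‖⁻¹ * inner ℝ u v)) := this
      _ = inner ℝ u v := by field_simp
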